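/- Let G be a nilpotent group, n ≥ 1, x an element of G^{(n)}_H, and t an element of G whose image in G/G^{(1)}_H is nontrivial. Then in the Z[G/G^{(n)}_H]-module G^{(n)}_H/[G^{(n)}_H, G^{(n)}_H], the class [x] satisfies [x]·(t-1)^k = 0 for some k ≥ 1, where t also denotes the image of t in G/G^{(n)}_H; hence x lies in G^{(n+1)}_H. Consequently, for a nilpotent group, G^{(n)}_H = G^{(1)}_H for all n ≥ 1. -/

import Mathlib

open scoped Classical

/-- The coefficient, at the coset `g N`, of the element of `ℤ[G/N]` represented by the
formal sum `∑ kᵢ·ηᵢ` encoded by the list `l` of pairs `(kᵢ, ηᵢ)`. -/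
noncomputable def cosetCoeff {G : Type} [Group G] (N : Subgroup G)
    (l : List (ℤ × G)) (g : G) : ℤ :=
  (l.map fun p => if p.2⁻¹ * g ∈ N then p.1 else 0).sum

/-- The list `l` of pairs `(kᵢ, ηᵢ)` represents a nonzero element of `ℤ[G/N]`. -/
def NonzeroMod {G : Type} [Group G] (N : Subgroup G) (l : List (ℤ × G)) : Prop :=
  ∃ g : G, cosetCoeff N l g ≠ 0

/-- The result of acting on the class of `x` in `N/[N,N]` by the element of `ℤ[G/N]`
represented by `l = [(k₁,η₁),…]`, computed in `G`:  `∏ ηᵢ⁻¹ x^{kᵢ} ηᵢ`. -/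
def actList {G : Type} [Group G] (x : G) (l : List (ℤ × G)) : G :=
  (l.map fun p => p.2⁻¹ * x ^ p.1 * p.2).prod

/-- One step of the torsion-free derived series: the preimage in `N` of the
`ℤ[G/N]`-torsion submodule of `N/[N,N]` (wrapped with `Subgroup.closure`; since
`ℤ[G/N]` is an Ore domain the underlying set is already a subgroup). -/
def tfStep {G : Type} [Group G] (N : Subgroup G) : Subgroup G :=
  Subgroup.closure
    { x | x ∈ N ∧ ∃ l : List (ℤ × G), NonzeroMod N l ∧ actList x l ∈ ⁅N, N⁆ }

/-- Harvey's torsion-free derived series `G⁽ⁿ⁾_H`. -/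
def tfH (G : Type) [Group G] : ℕ → Subgroup G
  | 0 => ⊤
  | n + 1 => tfStep (tfH G n)

/-! ### Auxiliary material -/

/-- Signed binomial coefficients: the coefficients of `(t-1)^k`. -/
def bc (k i : ℕ) : ℤ := (-1) ^ (k - i) * (k.choose i : ℤ)

/-- The list representing `(t-1)^k` in `ℤ[G/N]`. -/
def bl {G : Type} [Group G] (t : G) (k : ℕ) : List (ℤ × G) :=
  (List.range (k + 1)).map fun i => (bc k i, t ^ i)

lemma bc_succ_succ (k i : ℕ) : bc (k+1) (i+1) = bc k i - bc k (i+1) := by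
  unfold bc
  rcases Nat.lt_or_ge i k with h | h
  · rw [Nat.succ_sub_succ, Nat.choose_succ_succ]
    have h1 : k - i = (k - (i+1)) + 1 := by omega
    push_cast
    rw [h1, pow_succ]
    ring
  · rcases Nat.eq_or_lt_of_le h with rfl | h2
    · simp [Nat.choose_succ_succ, Nat.choose_succ_self]
    · rw [Nat.choose_eq_zero_of_lt (by omega), Nat.choose_eq_zero_of_lt (by omega),
        Nat.choose_eq_zero_of_lt (by omega)]
      simp

lemma bc_zero (k : ℕ) : bc k 0 = (-1)^k := by simp [bc]

lemma bc_self_succ (k : ℕ) : bc k (k+1) = 0 := by simp [bc, Nat.choose_succ_self]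

section Basic
variable {G : Type} [Group G]

lemma tfStep_le (N : Subgroup G) : tfStep N ≤ N :=
  (Subgroup.closure_le N).2 fun _ hx => hx.1

lemma tfH_le_one (n : ℕ) (hn : 1 ≤ n) : tfH G n ≤ tfH G 1 := by
  induction n with
  | zero => omega
  | succ m ih =>
    rcases Nat.eq_or_lt_of_le hn with h | h
    · rw [← h]
    · exact le_trans (tfStep_le _) (ih (by omega))

lemma actList_conj (x g : G) (l : List (ℤ × G)) :
    actList (g * x * g⁻¹) (l.map fun p => (p.1, g * p.2 * g⁻¹)) = g * actList x l * g⁻¹ := by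
  unfold actList
  rw [List.map_map]
  have : ((MulAut.conj g).toMonoidHom : G →* G) (l.map fun p => p.2⁻¹ * x ^ p.1 * p.2).prod
      = ((l.map fun p => p.2⁻¹ * x ^ p.1 * p.2).map (MulAut.conj g)).prod := map_list_prod _ _
  simp only [MulEquiv.toMonoidHom_eq_coe, MonoidHom.coe_coe, MulAut.conj_apply] at this
  rw [this, List.map_map]
  congr 1
  apply List.map_congr_left
  intro p _
  simp only [Function.comp, MulAut.conj_apply]
  rw [conj_zpow]
  group

lemma cosetCoeff_conj (N : Subgroup G) [hN : N.Normal] (g h : G) (l : List (ℤ × G)) :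
    cosetCoeff N (l.map fun p => (p.1, g * p.2 * g⁻¹)) (g * h * g⁻¹) = cosetCoeff N l h := by
  unfold cosetCoeff
  rw [List.map_map]
  congr 1
  apply List.map_congr_left
  intro p _
  simp only [Function.comp]
  congr 1
  have : (g * p.2 * g⁻¹)⁻¹ * (g * h * g⁻¹) = g * (p.2⁻¹ * h) * g⁻¹ := by group
  rw [this, eq_iff_iff]
  constructor
  · intro hmem
    have := hN.conj_mem _ hmem g⁻¹
    simpa [mul_assoc] using this
  · intro hmem
    exact hN.conj_mem _ hmem g

lemma tfStep_normal (N : Subgroup G) [hN : N.Normal] : (tfStep N).Normal := by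
  constructor
  intro a ha g
  unfold tfStep at ha ⊢
  induction ha using Subgroup.closure_induction with
  | one => simpa using Subgroup.one_mem _
  | mul y z _ _ hy hz => simpa [mul_assoc] using Subgroup.mul_mem _ hy hz
  | inv y _ hy => simpa [mul_assoc] using Subgroup.inv_mem _ hy
  | mem y hy =>
    apply Subgroup.subset_closure
    obtain ⟨hyN, l, hl, hact⟩ := hy
    refine ⟨hN.conj_mem _ hyN g, l.map fun p => (p.1, g * p.2 * g⁻¹), ?_, ?_⟩
    · obtain ⟨h, hh⟩ := hl
      exact ⟨g * h * g⁻¹, by rwa [cosetCoeff_conj]⟩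
    · rw [actList_conj]
      haveI : (⁅N, N⁆ : Subgroup G).Normal := inferInstance
      exact this.conj_mem _ hact g

lemma tfH_normal (n : ℕ) : (tfH G n).Normal := by
  induction n with
  | zero => exact inferInstanceAs (⊤ : Subgroup G).Normal
  | succ m ih =>
    haveI := ih
    exact tfStep_normal _

/-- The sequence of iterated commutators `y₀ = x`, `y_{k+1} = t⁻¹ yₖ t yₖ⁻¹`. -/
def yseq {G : Type} [Group G] (t x : G) : ℕ → G
  | 0 => x
  | k+1 => t⁻¹ * yseq t x k * t * (yseq t x k)⁻¹

open scoped commutatorElement in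
lemma yseq_mem_lcs (t x : G) : ∀ k, yseq t x k ∈ (⊤ : Subgroup G).lowerCentralSeries k
  | 0 => by simp [yseq, Subgroup.lowerCentralSeries_zero]
  | k+1 => by
      have h := yseq_mem_lcs t x k
      show t⁻¹ * yseq t x k * t * (yseq t x k)⁻¹ ∈ _
      have h2 : ⁅yseq t x k, t⁻¹⁆⁻¹ = t⁻¹ * yseq t x k * t * (yseq t x k)⁻¹ := by
        rw [commutatorElement_inv, commutatorElement_def, inv_inv]
      rw [← h2, Subgroup.lowerCentralSeries_succ]
      exact inv_mem (Subgroup.commutator_mem_commutator h (Subgroup.mem_top _))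

lemma yseq_eventually [Group.IsNilpotent G] (t x : G) :
    ∃ c : ℕ, ∀ k, c ≤ k → yseq t x k = 1 := by
  obtain ⟨c, hc⟩ := Subgroup.nilpotent_iff_lowerCentralSeries.1 ‹Group.IsNilpotent G›
  refine ⟨c, ?_⟩
  have base : yseq t x c = 1 := by
    have := yseq_mem_lcs t x c
    rw [hc, Subgroup.mem_bot] at this
    exact this
  have step : ∀ j, yseq t x (c + j) = 1 := by
    intro j
    induction j with
    | zero => exact base
    | succ j ih => show t⁻¹ * yseq t x (c + j) * t * (yseq t x (c + j))⁻¹ = 1; rw [ih]; group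
  intro k hk
  have := step (k - c)
  rwa [Nat.add_sub_cancel' hk] at this

end Basic

/-! ### The quotient `G/[N,N]` and the image of `N` in it -/

section Q
variable {G : Type} [Group G] (N : Subgroup G) [hN : N.Normal]

/-- image of `N` in `G/[N,N]` -/
def Mgrp : Subgroup (G ⧸ (⁅N, N⁆ : Subgroup G)) := N.map (QuotientGroup.mk' _)

noncomputable instance : CommGroup (Mgrp N) :=
  { (inferInstance : Group (Mgrp N)) with
    mul_comm := by
      rintro ⟨a, ha⟩ ⟨b, hb⟩
      ext
      obtain ⟨m, hm, rfl⟩ := ha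
      obtain ⟨n, hn, rfl⟩ := hb
      show (QuotientGroup.mk' _) m * (QuotientGroup.mk' _) n
          = (QuotientGroup.mk' _) n * (QuotientGroup.mk' _) m
      apply commutatorElement_eq_one_iff_mul_comm.1
      rw [← map_commutatorElement]
      exact (QuotientGroup.eq_one_iff _).2 (Subgroup.commutator_mem_commutator hm hn) }

/-- conjugation by `t` on `Mgrp N` -/
def tauM (t : G) : Mgrp N →* Mgrp N where
  toFun u := ⟨(QuotientGroup.mk' (⁅N, N⁆ : Subgroup G) t)⁻¹ * u *
      QuotientGroup.mk' (⁅N, N⁆ : Subgroup G) t, by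
    obtain ⟨m, hm, hm'⟩ := u.2
    refine ⟨t⁻¹ * m * t, hN.conj_mem' m hm t, ?_⟩
    rw [← hm']
    rw [map_mul, map_mul, map_inv]⟩
  map_one' := by ext; simp
  map_mul' a b := by ext; push_cast; group

variable (t x : G) (hx : x ∈ N)

def uElt (i : ℕ) : Mgrp N :=
  ⟨(QuotientGroup.mk' (⁅N, N⁆ : Subgroup G) t)⁻¹ ^ i *
      QuotientGroup.mk' (⁅N, N⁆ : Subgroup G) x *
      (QuotientGroup.mk' (⁅N, N⁆ : Subgroup G) t) ^ i, by
    refine ⟨(t ^ i)⁻¹ * x * t ^ i, hN.conj_mem' x hx (t ^ i), ?_⟩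
    rw [map_mul, map_mul, map_inv, map_pow, inv_pow]⟩

lemma tau_u (i : ℕ) :
    tauM N t (uElt N t x hx i) = uElt N t x hx (i + 1) := by
  ext
  simp only [tauM, uElt, MonoidHom.coe_mk, OneHom.coe_mk]
  rw [pow_succ, pow_succ']
  group

lemma key (k : ℕ) :
    QuotientGroup.mk' (⁅N, N⁆ : Subgroup G) (yseq t x k)
      = ↑(∏ i ∈ Finset.range (k + 1), uElt N t x hx i ^ bc k i) := by
  induction k with
  | zero =>
    rw [Finset.prod_range_one]
    show QuotientGroup.mk' (⁅N, N⁆ : Subgroup G) x = _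
    rw [SubgroupClass.coe_zpow]
    show _ = ((QuotientGroup.mk' (⁅N, N⁆ : Subgroup G) t)⁻¹ ^ 0 *
      QuotientGroup.mk' (⁅N, N⁆ : Subgroup G) x *
      (QuotientGroup.mk' (⁅N, N⁆ : Subgroup G) t) ^ 0) ^ bc 0 0
    norm_num [bc]
  | succ k ih =>
    show QuotientGroup.mk' (⁅N, N⁆ : Subgroup G)
        (t⁻¹ * yseq t x k * t * (yseq t x k)⁻¹) = _
    rw [map_mul, map_mul, map_mul, map_inv, map_inv, ih]
    set P : Mgrp N := ∏ i ∈ Finset.range (k + 1), uElt N t x hx i ^ bc k i with hP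
    have h1 : (QuotientGroup.mk' (⁅N, N⁆ : Subgroup G) t)⁻¹ * ↑P *
        QuotientGroup.mk' (⁅N, N⁆ : Subgroup G) t = ↑(tauM N t P) := rfl
    rw [h1, ← InvMemClass.coe_inv, ← Subgroup.coe_mul]
    congr 1
    have hτ : tauM N t P = ∏ i ∈ Finset.range (k + 1), uElt N t x hx (i + 1) ^ bc k i := by
      rw [hP, map_prod]
      exact Finset.prod_congr rfl fun i _ => by rw [map_zpow, tau_u]
    have hPsplit : P = (∏ i ∈ Finset.range (k + 1), uElt N t x hx (i + 1) ^ bc k (i + 1)) *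
        uElt N t x hx 0 ^ bc k 0 := by
      rw [hP, Finset.prod_range_succ']
      congr 1
      rw [Finset.prod_range_succ, bc_self_succ, zpow_zero, mul_one]
    rw [hτ, hPsplit]
    conv_rhs => rw [Finset.prod_range_succ']
    have h2 : ∀ i ∈ Finset.range (k + 1),
        uElt N t x hx (i + 1) ^ bc (k + 1) (i + 1)
          = uElt N t x hx (i + 1) ^ bc k i * (uElt N t x hx (i + 1) ^ bc k (i + 1))⁻¹ := by
      intro i _
      rw [← zpow_neg, ← zpow_add, bc_succ_succ, sub_eq_add_neg]
    rw [Finset.prod_congr rfl h2, Finset.prod_mul_distrib, Finset.prod_inv_distrib]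
    have h3 : bc (k + 1) 0 = - bc k 0 := by rw [bc_zero, bc_zero, pow_succ]; ring
    rw [h3, zpow_neg, mul_inv_rev]
    rw [mul_comm ((uElt N t x hx 0 ^ bc k 0)⁻¹), ← mul_assoc]

lemma conj_zpow' {H : Type} [Group H] (a b : H) (c : ℤ) :
    (a⁻¹ * b * a) ^ c = a⁻¹ * b ^ c * a := by
  simpa using conj_zpow (i := c) (a := a⁻¹) (b := b)

lemma phi_actList (k : ℕ) :
    QuotientGroup.mk' (⁅N, N⁆ : Subgroup G) (actList x (bl t k))
      = ↑(∏ i ∈ Finset.range (k + 1), uElt N t x hx i ^ bc k i) := by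
  have hpoint : ∀ i : ℕ,
      QuotientGroup.mk' (⁅N, N⁆ : Subgroup G) ((t ^ i)⁻¹ * x ^ bc k i * t ^ i)
        = ((uElt N t x hx i ^ bc k i : Mgrp N) : G ⧸ (⁅N, N⁆ : Subgroup G)) := by
    intro i
    rw [map_mul, map_mul, map_inv, map_zpow, map_pow, SubgroupClass.coe_zpow]
    show _ = ((QuotientGroup.mk' (⁅N, N⁆ : Subgroup G) t)⁻¹ ^ i *
        QuotientGroup.mk' (⁅N, N⁆ : Subgroup G) x *
        (QuotientGroup.mk' (⁅N, N⁆ : Subgroup G) t) ^ i) ^ bc k i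
    rw [inv_pow, conj_zpow']
  have h1 : (∏ i ∈ Finset.range (k + 1), uElt N t x hx i ^ bc k i : Mgrp N)
      = ((List.range (k + 1)).map fun i => uElt N t x hx i ^ bc k i).prod := rfl
  rw [h1, SubmonoidClass.coe_list_prod, List.map_map]
  unfold actList bl
  rw [List.map_map, map_list_prod, List.map_map]
  congr 1
  apply List.map_congr_left
  intro i _
  exact hpoint i

include hx in
lemma actList_bl_mem [Group.IsNilpotent G] :
    ∃ c : ℕ, ∀ k, c ≤ k → actList x (bl t k) ∈ (⁅N, N⁆ : Subgroup G) := by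
  obtain ⟨c, hc⟩ := yseq_eventually t x
  refine ⟨c, fun k hk => ?_⟩
  have h1 := phi_actList N t x hx k
  have h2 := key N t x hx k
  rw [← h2, hc k hk, map_one] at h1
  exact (QuotientGroup.eq_one_iff _).1 h1

end Q

section NZ
variable {G : Type} [Group G]

lemma cosetCoeff_bl (N : Subgroup G) (t g : G) (k : ℕ) :
    cosetCoeff N (bl t k) g
      = ∑ i ∈ Finset.range (k + 1), if (t ^ i)⁻¹ * g ∈ N then bc k i else 0 := by
  unfold cosetCoeff bl
  rw [List.map_map]
  rfl

lemma nonzeroMod_bl (N : Subgroup G) (t : G) (ht : t ∉ N) (k : ℕ) :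
    NonzeroMod N (bl t k) := by
  by_cases hfin : ∃ m : ℕ, 0 < m ∧ t ^ m ∈ N
  · -- t has finite order d ≥ 2 modulo N
    obtain ⟨d, hd_pos, hd_mem, hd_min⟩ : ∃ d : ℕ, 0 < d ∧ t ^ d ∈ N ∧
        ∀ m, 0 < m → t ^ m ∈ N → d ≤ m :=
      ⟨Nat.find hfin, (Nat.find_spec hfin).1, (Nat.find_spec hfin).2,
        fun m hm1 hm2 => Nat.find_le ⟨hm1, hm2⟩⟩
    have hd2 : 2 ≤ d := by
      by_contra h
      have h1 : d = 1 := by omega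
      have := hd_mem
      rw [h1, pow_one] at this
      exact ht this
    have hdvd : ∀ a : ℕ, t ^ a ∈ N ↔ d ∣ a := by
      intro a
      constructor
      · intro ha
        by_contra hnd
        have hr : a % d ≠ 0 := fun h0 => hnd (Nat.dvd_of_mod_eq_zero h0)
        have hmm : t ^ (a % d) ∈ N := by
          conv at ha => rw [← Nat.div_add_mod a d]
          rw [pow_add, pow_mul] at ha
          exact (N.mul_mem_cancel_left (N.pow_mem hd_mem (a / d))).1 ha
        have h1 := hd_min _ (Nat.pos_of_ne_zero hr) hmm
        have h2 := Nat.mod_lt a hd_pos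
        omega
      · rintro ⟨q, rfl⟩
        rw [pow_mul]
        exact N.pow_mem hd_mem q
    have hmem_iff : ∀ i j : ℕ, ((t ^ i)⁻¹ * t ^ j ∈ N) ↔ i % d = j % d := by
      have haux : ∀ i j : ℕ, i ≤ j → (((t ^ i)⁻¹ * t ^ j ∈ N) ↔ i % d = j % d) := by
        intro i j hij
        have he : (t ^ i)⁻¹ * t ^ j = t ^ (j - i) := by
          rw [← Nat.add_sub_cancel' hij, pow_add, inv_mul_cancel_left, Nat.add_sub_cancel_left]
        rw [he, hdvd, ← Nat.modEq_iff_dvd' hij]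
        exact Iff.rfl
      intro i j
      rcases le_total i j with hij | hij
      · exact haux i j hij
      · rw [← inv_mem_iff (x := (t ^ i)⁻¹ * t ^ j), mul_inv_rev, inv_inv]
        rw [haux j i hij]
        exact eq_comm
    by_contra hzero
    simp only [NonzeroMod, not_exists, not_not] at hzero
    -- pass to ℂ with a primitive d-th root of unity
    set ζ : ℂ := Complex.exp (2 * Real.pi * Complex.I / d) with hζdef
    have hζ : IsPrimitiveRoot ζ d := Complex.isPrimitiveRoot_exp d (by omega)
    have hζd : ζ ^ d = 1 := hζ.pow_eq_one
    have hζ1 : ζ ≠ 1 := hζ.ne_one (by omega)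
    have hne : (ζ - 1) ^ k ≠ 0 := pow_ne_zero _ (sub_ne_zero.2 hζ1)
    apply hne
    have hmod : ∀ i : ℕ, ζ ^ i = ζ ^ (i % d) := by
      intro i
      conv_lhs => rw [← Nat.div_add_mod i d]
      rw [pow_add, pow_mul, hζd, one_pow, one_mul]
    have hbin : (ζ - 1) ^ k = ∑ i ∈ Finset.range (k + 1), (bc k i : ℂ) * ζ ^ i := by
      have h := add_pow ζ (-1 : ℂ) k
      rw [← sub_eq_add_neg] at h
      rw [h]
      refine Finset.sum_congr rfl fun i hi => ?_
      have : ((-1 : ℂ)) ^ (k - i) = ((-1 : ℤ) ^ (k - i) : ℤ) := by push_cast; ring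
      rw [bc]
      push_cast
      ring
    rw [hbin]
    calc ∑ i ∈ Finset.range (k + 1), (bc k i : ℂ) * ζ ^ i
        = ∑ i ∈ Finset.range (k + 1), (bc k i : ℂ) * ζ ^ (i % d) := by
          exact Finset.sum_congr rfl fun i _ => by rw [← hmod]
      _ = ∑ j ∈ Finset.range d, ∑ i ∈ (Finset.range (k + 1)).filter (fun i => i % d = j),
            (bc k i : ℂ) * ζ ^ (i % d) := by
          rw [Finset.sum_fiberwise_of_maps_to (fun i _ => Finset.mem_range.2 (Nat.mod_lt i hd_pos))]
      _ = ∑ j ∈ Finset.range d, ((cosetCoeff N (bl t k) (t ^ j) : ℤ) : ℂ) * ζ ^ j := by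
          refine Finset.sum_congr rfl fun j hj => ?_
          have hjd : j % d = j := Nat.mod_eq_of_lt (Finset.mem_range.1 hj)
          have : ∑ i ∈ (Finset.range (k + 1)).filter (fun i => i % d = j),
              (bc k i : ℂ) * ζ ^ (i % d)
              = (∑ i ∈ (Finset.range (k + 1)).filter (fun i => i % d = j), (bc k i : ℂ)) * ζ ^ j := by
            rw [Finset.sum_mul]
            refine Finset.sum_congr rfl fun i hi => ?_
            rw [(Finset.mem_filter.1 hi).2]
          rw [this]
          congr 1
          rw [cosetCoeff_bl]
          push_cast
          rw [Finset.sum_filter]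
          exact Finset.sum_congr rfl fun i _ => by simp only [hmem_iff, hjd]
      _ = 0 := by
          refine Finset.sum_eq_zero fun j _ => ?_
          rw [hzero (t ^ j)]
          simp
  · -- no positive power of t lies in N
    refine ⟨1, ?_⟩
    rw [cosetCoeff_bl]
    rw [Finset.sum_eq_single 0]
    · rw [if_pos (by simpa using N.one_mem)]
      simp [bc]
    · intro i hi hi0
      rw [if_neg]
      intro hmem
      rw [mul_one, inv_mem_iff] at hmem
      exact hfin ⟨i, Nat.pos_of_ne_zero hi0, hmem⟩
    · intro h
      exact absurd (Finset.mem_range.2 (by omega)) h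
end NZ


/-- Let `G` be nilpotent, `n ≥ 1`, `x ∈ G⁽ⁿ⁾_H`, and `t ∈ G`
nontrivial in `G/G⁽¹⁾_H`.  Then in the `ℤ[G/G⁽ⁿ⁾_H]`-module `G⁽ⁿ⁾_H/[G⁽ⁿ⁾_H,G⁽ⁿ⁾_H]`
the class `[x]` satisfies `[x]·(t-1)^k = 0` for some `k ≥ 1` (spelled out via the
binomial expansion `(t-1)^k = ∑ (-1)^{k-i} C(k,i) tⁱ`); hence `x ∈ G⁽ⁿ⁺¹⁾_H`.
Consequently `G⁽ᵐ⁾_H = G⁽¹⁾_H` for all `m ≥ 1`. -/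
theorem nilpotent_tfH_stabilizes (G : Type) [Group G] [Group.IsNilpotent G]
    (n : ℕ) (hn : 1 ≤ n) (x : G) (hx : x ∈ tfH G n) (t : G) (ht : t ∉ tfH G 1) :
    (∃ k : ℕ, 1 ≤ k ∧
      actList x ((List.range (k + 1)).map fun i =>
        ((-1 : ℤ) ^ (k - i) * (k.choose i : ℤ), t ^ i)) ∈ ⁅tfH G n, tfH G n⁆) ∧
    x ∈ tfH G (n + 1) ∧
    (∀ m : ℕ, 1 ≤ m → tfH G m = tfH G 1) := by
  haveI hNn : (tfH G n).Normal := tfH_normal n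
  haveI hN1 : (tfH G 1).Normal := tfH_normal 1
  have htn : t ∉ tfH G n := fun h => ht (tfH_le_one n hn h)
  obtain ⟨c, hc⟩ := actList_bl_mem (tfH G n) t x hx
  have hblshow : ∀ k : ℕ, ((List.range (k + 1)).map fun i =>
      ((-1 : ℤ) ^ (k - i) * (k.choose i : ℤ), t ^ i)) = bl t k := fun k => rfl
  refine ⟨⟨c + 1, by omega, ?_⟩, ?_, ?_⟩
  · rw [hblshow]
    exact hc (c + 1) (by omega)
  · show x ∈ tfStep (tfH G n)
    exact Subgroup.subset_closure
      ⟨hx, bl t (c + 1), nonzeroMod_bl _ t htn _, hc (c + 1) (by omega)⟩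
  · have hfix : tfStep (tfH G 1) = tfH G 1 := by
      refine le_antisymm (tfStep_le _) fun z hz => ?_
      obtain ⟨c', hc'⟩ := actList_bl_mem (tfH G 1) t z hz
      exact Subgroup.subset_closure
        ⟨hz, bl t c', nonzeroMod_bl _ t ht _, hc' c' le_rfl⟩
    intro m hm
    induction m with
    | zero => omega
    | succ m ih =>
      rcases Nat.eq_or_lt_of_le hm with h | h
      · rw [← h]
      · have h2 := ih (by omega)
        show tfStep (tfH G m) = tfH G 1
        rw [h2, hfix]
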